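/- There exist permutations σ, τ of {1,…,m} such that a_{σ(i)} + b_{τ(i)} = s_i for all i ∈ {1,…,m} if and only if there exist permutations σ', τ' of {1,…,n} such that x_{σ'(i)} + y_{τ'(i)} = z_i for all i ∈ {1,…,n}. (That is, the NMTS instances (A,B,S) and (X,Y,Z) are equivalent.) -/

import Mathlib

private lemma stmt7_mono_aux (f : ℕ → ℕ) : ∀ (m : ℕ),
    (∀ i, 1 ≤ i → i < m → f i < f (i + 1)) →
    ∀ i, 1 ≤ i → i ≤ m → f i ≤ f m := by
  intro m
  induction m with
  | zero => intro _ i hi him; omega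
  | succ k ih =>
    intro h i hi him
    rcases Nat.lt_or_ge i (k + 1) with h2 | h2
    · have h1 : f i ≤ f k := ih (fun j hj hjk => h j hj (by omega)) i hi (by omega)
      have h3 : f k < f (k + 1) := h k (by omega) (by omega)
      omega
    · have : i = k + 1 := by omega
      subst this; exact le_rfl

theorem stmt_7 (m : ℕ) (hm : 1 ≤ m) (a b s x y z : ℕ → ℕ)
    (hapos : ∀ i, 1 ≤ i → i ≤ m → 0 < a i)
    (hbpos : ∀ i, 1 ≤ i → i ≤ m → 0 < b i)
    (hspos : ∀ i, 1 ≤ i → i ≤ m → 0 < s i)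
    (hamono : ∀ i, 1 ≤ i → i < m → a i < a (i + 1))
    (hbmono : ∀ i, 1 ≤ i → i < m → b i < b (i + 1))
    (hsmono : ∀ i, 1 ≤ i → i < m → s i < s (i + 1))
    (hab : a m < b m)
    (hsab : s m ≤ a m + b m)
    (hx : ∀ i, 1 ≤ i → i ≤ m → x i = 2 * (a i + (b m + 2)))
    (hxn : x (m + 1) = 2 * (a m + 1 + (b m + 2)))
    (hy : ∀ i, 1 ≤ i → i ≤ m → y i = 2 * (b i + 3 * (b m + 2)))
    (hyn : y (m + 1) = 2 * (b m + 1 + 3 * (b m + 2)))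
    (hz : ∀ i, 1 ≤ i → i ≤ m → z i = 2 * (s i + 4 * (b m + 2)))
    (hzn : z (m + 1) = 2 * (a m + b m + 2 + 4 * (b m + 2))) :
    (∃ σ τ : Equiv.Perm (Fin m), ∀ i : Fin m,
        a ((σ i : ℕ) + 1) + b ((τ i : ℕ) + 1) = s ((i : ℕ) + 1)) ↔
    (∃ σ' τ' : Equiv.Perm (Fin (m + 1)), ∀ i : Fin (m + 1),
        x ((σ' i : ℕ) + 1) + y ((τ' i : ℕ) + 1) = z ((i : ℕ) + 1)) := by
  have ha_le : ∀ i, 1 ≤ i → i ≤ m → a i ≤ a m := stmt7_mono_aux a m hamono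
  have hb_le : ∀ i, 1 ≤ i → i ≤ m → b i ≤ b m := stmt7_mono_aux b m hbmono
  constructor
  · rintro ⟨σ, τ, hst⟩
    refine ⟨finSuccEquivLast.trans ((σ.optionCongr).trans finSuccEquivLast.symm),
            finSuccEquivLast.trans ((τ.optionCongr).trans finSuccEquivLast.symm), ?_⟩
    intro i
    induction i using Fin.lastCases with
    | last =>
      simp only [Equiv.trans_apply, finSuccEquivLast_last, Equiv.optionCongr_apply,
        Option.map_none, finSuccEquivLast_symm_none, Fin.val_last]
      rw [hxn, hyn, hzn]; ring
    | cast j =>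
      simp only [Equiv.trans_apply, finSuccEquivLast_castSucc, Equiv.optionCongr_apply,
        Option.map_some, finSuccEquivLast_symm_some, Fin.coe_castSucc]
      have h1 : ((σ j : ℕ)) < m := (σ j).isLt
      have h2 : ((τ j : ℕ)) < m := (τ j).isLt
      have h3 : ((j : ℕ)) < m := j.isLt
      rw [hx _ (by omega) (by omega), hy _ (by omega) (by omega),
        hz _ (by omega) (by omega)]
      have := hst j
      omega
  · rintro ⟨σ', τ', hst⟩
    have hlast := hst (Fin.last m)
    rw [Fin.val_last] at hlast
    set j : ℕ := (σ' (Fin.last m) : ℕ) with hj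
    set k : ℕ := (τ' (Fin.last m) : ℕ) with hk
    have hjm : j < m + 1 := (σ' (Fin.last m)).isLt
    have hkm : k < m + 1 := (τ' (Fin.last m)).isLt
    have hjem : j = m ∧ k = m := by
      rcases Nat.lt_or_ge j m with hj1 | hj1 <;> rcases Nat.lt_or_ge k m with hk1 | hk1
      · rw [hx _ (by omega) (by omega), hy _ (by omega) (by omega), hzn] at hlast
        have := ha_le (j + 1) (by omega) (by omega)
        have := hb_le (k + 1) (by omega) (by omega)
        omega
      · have hke : k = m := by omega
        rw [hx _ (by omega) (by omega), hke, hyn, hzn] at hlast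
        have := ha_le (j + 1) (by omega) (by omega)
        omega
      · have hje : j = m := by omega
        rw [hje, hxn, hy _ (by omega) (by omega), hzn] at hlast
        have := hb_le (k + 1) (by omega) (by omega)
        omega
      · exact ⟨by omega, by omega⟩
    have hσlast : σ' (Fin.last m) = Fin.last m := by
      apply Fin.ext; rw [Fin.val_last]; exact hjem.1
    have hτlast : τ' (Fin.last m) = Fin.last m := by
      apply Fin.ext; rw [Fin.val_last]; exact hjem.2
    have hne : ∀ (ρ : Equiv.Perm (Fin (m + 1))), ρ (Fin.last m) = Fin.last m →
        ∀ i : Fin m, ((ρ i.castSucc : ℕ)) < m := by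
      intro ρ hρ i
      have h1 : ρ i.castSucc ≠ Fin.last m := by
        intro h
        have h2 := ρ.injective (h.trans hρ.symm)
        have h3 : ((i.castSucc : Fin (m+1)) : ℕ) = m := by rw [h2, Fin.val_last]
        rw [Fin.coe_castSucc] at h3
        have := i.isLt
        omega
      have h2 : ((ρ i.castSucc : ℕ)) ≠ m := fun h => h1 (Fin.ext (by rw [h, Fin.val_last]))
      have := (ρ i.castSucc).isLt
      omega
    have hσ := hne σ' hσlast
    have hτ := hne τ' hτlast
    let f : Fin m → Fin m := fun i => ⟨(σ' i.castSucc : ℕ), hσ i⟩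
    let g : Fin m → Fin m := fun i => ⟨(τ' i.castSucc : ℕ), hτ i⟩
    have hfi : Function.Injective f := by
      intro i i' h
      have hv : ((σ' i.castSucc : Fin (m+1)) : ℕ) = ((σ' i'.castSucc : Fin (m+1)) : ℕ) :=
        by simpa only [f, g] using congrArg Fin.val h
      have : σ' i.castSucc = σ' i'.castSucc := Fin.ext hv
      exact Fin.castSucc_injective m (σ'.injective this)
    have hgi : Function.Injective g := by
      intro i i' h
      have hv : ((τ' i.castSucc : Fin (m+1)) : ℕ) = ((τ' i'.castSucc : Fin (m+1)) : ℕ) :=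
        by simpa only [f, g] using congrArg Fin.val h
      have : τ' i.castSucc = τ' i'.castSucc := Fin.ext hv
      exact Fin.castSucc_injective m (τ'.injective this)
    refine ⟨Equiv.ofBijective f (Finite.injective_iff_bijective.mp hfi),
            Equiv.ofBijective g (Finite.injective_iff_bijective.mp hgi), ?_⟩
    intro i
    have h0 := hst i.castSucc
    simp only [Fin.coe_castSucc] at h0
    have h1 : ((σ' i.castSucc : ℕ)) < m := hσ i
    have h2 : ((τ' i.castSucc : ℕ)) < m := hτ i
    have h3 : ((i : ℕ)) < m := i.isLt
    rw [hx _ (by omega) (by omega), hy _ (by omega) (by omega),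
      hz _ (by omega) (by omega)] at h0
    simp only [Equiv.ofBijective_apply, f, g]
    omega
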